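/- Let F be a finite field with Q elements, and let r, u be positive integers with r ≤ u, r ≤ Q, and u ≤ Q + 1 if Q is odd or r ∉ {3, Q − 1}, while u ≤ Q + 2 is allowed if Q is even and r ∈ {3, Q − 1}. Then there exists an r × u MDS matrix over F. -/

import Mathlib

open Matrix Finset


/-- A matrix G with r rows (and columns indexed by an arbitrary type) is MDS if every
r × r submatrix formed by selecting any r distinct columns is nonsingular. -/
def IsMDS {F : Type*} [Field F] {r : ℕ} {n : Type*}
    (G : Matrix (Fin r) n F) : Prop :=
  ∀ σ : Fin r → n, Function.Injective σ →
    (Matrix.of fun p q : Fin r => G p (σ q)).det ≠ 0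
open Matrix Finset in
lemma vdm_det {F : Type*} [Field F] {k : ℕ} {x : Fin k → F} (hx : Function.Injective x) :
    (Matrix.of fun p q : Fin k => x q ^ (p : ℕ)).det ≠ 0 := by
  have h : (Matrix.of fun p q : Fin k => x q ^ (p : ℕ)) = (Matrix.vandermonde x)ᵀ := by
    ext p q; rfl
  rw [h, Matrix.det_transpose, Matrix.det_vandermonde]
  refine Finset.prod_ne_zero_iff.2 fun i _ => Finset.prod_ne_zero_iff.2 fun j hj => ?_
  exact sub_ne_zero.2 (hx.ne (Finset.mem_Ioi.1 hj).ne')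

lemma vdm_solve {F : Type*} [Field F] {k : ℕ} {x : Fin k → F} (hx : Function.Injective x)
    (c : Fin k → F) (h : ∀ i : Fin k, ∑ q, x q ^ (i : ℕ) * c q = 0) : c = 0 := by
  by_contra hc
  refine vdm_det hx (Matrix.exists_mulVec_eq_zero_iff.1 ⟨c, hc, ?_⟩)
  funext i
  simpa [Matrix.mulVec, dotProduct] using h i

/-- extended Reed-Solomon generator matrix -/
lemma extRS_mds {F : Type*} [Field F] (m : ℕ) :
    IsMDS (Matrix.of fun (i : Fin (m+1)) (o : Option F) =>
      o.elim (if i = Fin.last m then (1:F) else 0) (fun a => a ^ (i : ℕ))) := by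
  set G := Matrix.of fun (i : Fin (m+1)) (o : Option F) =>
      o.elim (if i = Fin.last m then (1:F) else 0) (fun a => a ^ (i : ℕ)) with hG
  intro σ hσ
  by_cases h : ∃ q0, σ q0 = none
  · obtain ⟨q0, hq0⟩ := h
    -- the other columns are of the form `some (α t)`
    have hne : ∀ t : Fin m, ∃ a, σ (q0.succAbove t) = some a := by
      intro t
      rcases Option.ne_none_iff_exists'.1 (fun hx => (Fin.succAbove_ne q0 t)
        (hσ (hx.trans hq0.symm))) with ⟨a, ha⟩
      exact ⟨a, ha⟩
    choose α hα using hne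
    have hαinj : Function.Injective α := by
      intro t t' htt
      have : σ (q0.succAbove t) = σ (q0.succAbove t') := by rw [hα, hα, htt]
      exact (Fin.succAbove_right_injective (p := q0)) (hσ this)
    intro hdet
    obtain ⟨c, hc, hMc⟩ := Matrix.exists_mulVec_eq_zero_iff.2 hdet
    have hrow : ∀ i : Fin (m+1), ∑ q, G i (σ q) * c q = 0 := by
      intro i
      have := congrFun hMc i
      simpa [Matrix.mulVec, dotProduct] using this
    set d : Fin m → F := fun t => c (q0.succAbove t) with hd
    have hd0 : d = 0 := by
      refine vdm_solve hαinj d fun j => ?_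
      have := hrow (Fin.castSucc j)
      rw [Fin.sum_univ_succAbove _ q0] at this
      have h1 : G (Fin.castSucc j) (σ q0) = 0 := by
        rw [hq0]; simp [hG, Fin.ne_of_lt (Fin.castSucc_lt_last j)]
      rw [h1, zero_mul, zero_add] at this
      calc ∑ t, α t ^ (j:ℕ) * d t
          = ∑ t, G (Fin.castSucc j) (σ (q0.succAbove t)) * c (q0.succAbove t) := by
            refine Finset.sum_congr rfl fun t _ => ?_
            rw [hα]; simp [hG, hd]
        _ = 0 := this
    have hcq0 : c q0 = 0 := by
      have := hrow (Fin.last m)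
      rw [Fin.sum_univ_succAbove _ q0] at this
      have h1 : G (Fin.last m) (σ q0) = 1 := by rw [hq0]; simp [hG]
      have h2 : ∀ t : Fin m, G (Fin.last m) (σ (q0.succAbove t)) * c (q0.succAbove t) = 0 := by
        intro t
        have : c (q0.succAbove t) = 0 := congrFun hd0 t
        rw [this, mul_zero]
      rw [h1, one_mul, Finset.sum_eq_zero fun t _ => h2 t, add_zero] at this
      exact this
    apply hc
    funext q
    by_cases hq : q = q0
    · rw [hq]; exact hcq0
    · obtain ⟨t, ht⟩ := Fin.exists_succAbove_eq hq
      rw [← ht]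
      exact congrFun hd0 t
  · push_neg at h
    have hne : ∀ q, ∃ a, σ q = some a := fun q => Option.ne_none_iff_exists'.1 (h q)
    choose α hα using hne
    have hαinj : Function.Injective α := by
      intro t t' htt
      apply hσ; rw [hα, hα, htt]
    have heq : (Matrix.of fun p q : Fin (m+1) => G p (σ q))
        = Matrix.of fun p q : Fin (m+1) => α q ^ (p : ℕ) := by
      ext p q; rw [Matrix.of_apply, hα]; rfl
    rw [heq]
    exact vdm_det hαinj

/-- `[I | B]` is MDS when every square submatrix of `B` is nonsingular. -/
lemma std_mds {F : Type*} [Field F] {r : ℕ} {m : Type*} [Fintype m] [DecidableEq m]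
    (B : Matrix (Fin r) m F)
    (hB : ∀ (k : ℕ) (s : Fin k → Fin r) (t : Fin k → m), Function.Injective s →
      Function.Injective t → (Matrix.of fun p q : Fin k => B (s p) (t q)).det ≠ 0) :
    IsMDS (Matrix.of fun (i : Fin r) (x : Fin r ⊕ m) =>
      Sum.elim (fun j => if i = j then (1:F) else 0) (fun a => B i a) x) := by
  set G := Matrix.of fun (i : Fin r) (x : Fin r ⊕ m) =>
      Sum.elim (fun j => if i = j then (1:F) else 0) (fun a => B i a) x with hG
  intro σ hσ hdet
  obtain ⟨c, hc, hMc⟩ := Matrix.exists_mulVec_eq_zero_iff.2 hdet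
  have hrow : ∀ i : Fin r, ∑ q, G i (σ q) * c q = 0 := by
    intro i
    simpa [Matrix.mulVec, dotProduct] using congrFun hMc i
  classical
  set T : Finset (Fin r) := Finset.univ.filter (fun q => (σ q).isRight) with hT
  set k := T.card with hk
  -- values in the B-part
  have haT : ∀ q : {x // x ∈ T}, ∃ a : m, σ q = Sum.inr a := by
    rintro ⟨q, hq⟩
    rw [hT, Finset.mem_filter] at hq
    exact Sum.isRight_iff.1 hq.2
  choose a ha using haT
  set R : Finset (Fin r) := Finset.univ.filter (fun i => ∀ q, σ q ≠ Sum.inl i) with hR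
  -- card bound
  have hcard : k ≤ R.card := by
    have h1 : Rᶜ = Finset.univ.filter (fun i => ∃ q, σ q = Sum.inl i) := by
      ext i
      simp [hR, Finset.mem_compl]
    have h2 : Rᶜ.card ≤ (Finset.univ.filter (fun q => (σ q).isLeft)).card := by
      rw [h1]
      refine Finset.card_le_card_of_surjOn (fun q => Sum.elim id (fun _ => q) (σ q)) ?_
      rintro i hi
      simp only [Finset.coe_filter, Set.mem_setOf_eq, Finset.mem_univ, true_and] at hi ⊢
      obtain ⟨q, hq⟩ := hi
      refine ⟨q, ?_, ?_⟩
      · show (σ q).isLeft = true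
        rw [hq]; rfl
      · show Sum.elim id (fun _ => q) (σ q) = i
        rw [hq]; rfl
    have h3 : (Finset.univ.filter (fun q => (σ q).isLeft)).card + k = r := by
      rw [hk, hT]
      have : (Finset.univ.filter (fun q => (σ q).isRight)) =
          (Finset.univ.filter (fun q => ¬ (σ q).isLeft)) := by
        ext q; simp [Sum.not_isLeft]
      rw [this, Finset.card_filter_add_card_filter_not]
      simp
    have h4 : R.card + Rᶜ.card = r := by
      rw [Finset.card_add_card_compl, Fintype.card_fin]
    omega
  obtain ⟨R', hR'R, hR'card⟩ := Finset.exists_subset_card_eq hcard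
  set eR := Finset.equivFinOfCardEq hR'card with heR
  set eT := Finset.equivFinOfCardEq (rfl : T.card = k) with heT
  set s : Fin k → Fin r := fun p => (eR.symm p : Fin r) with hs
  set t : Fin k → m := fun p => a (eT.symm p) with ht
  have hsinj : Function.Injective s :=
    Subtype.val_injective.comp eR.symm.injective
  have htinj : Function.Injective t := by
    intro p p' hpp
    have : σ (eT.symm p : Fin r) = σ (eT.symm p' : Fin r) := by
      rw [ha, ha]
      exact congrArg Sum.inr hpp
    exact (Equiv.injective _) (Subtype.val_injective (hσ this))
  set d : Fin k → F := fun p => c (eT.symm p : Fin r) with hd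
  have hsR : ∀ p, s p ∈ R := fun p => hR'R (eR.symm p).2
  -- d = 0
  have hd0 : d = 0 := by
    by_contra hdne
    refine hB k s t hsinj htinj (Matrix.exists_mulVec_eq_zero_iff.1 ⟨d, hdne, ?_⟩)
    funext p
    have hrw := hrow (s p)
    rw [← Finset.sum_filter_add_sum_filter_not Finset.univ (fun q => (σ q).isRight)] at hrw
    have hz : ∑ q ∈ Finset.univ.filter (fun q => ¬ (σ q).isRight), G (s p) (σ q) * c q = 0 := by
      refine Finset.sum_eq_zero fun q hq => ?_
      rw [Finset.mem_filter] at hq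
      obtain ⟨j, hj⟩ := Sum.isLeft_iff.1 (Sum.not_isRight.1 hq.2)
      have hji : j ≠ s p := by
        intro hji
        exact (Finset.mem_filter.1 (hsR p)).2 q (by rw [hj, hji])
      rw [hj]
      simp [hG, Ne.symm hji]
    have hTsum : ∑ q ∈ T, G (s p) (σ q) * c q = ∑ p' : Fin k, B (s p) (t p') * d p' := by
      rw [← Finset.sum_coe_sort T (fun q => G (s p) (σ q) * c q),
        ← Equiv.sum_comp eT.symm (fun x : {q // q ∈ T} => G (s p) (σ x) * c x)]
      refine Finset.sum_congr rfl fun p' _ => ?_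
      rw [ha]
      rfl
    rw [hTsum] at hrw
    simp only [Matrix.mulVec, dotProduct, Pi.zero_apply]
    rw [hz, add_zero] at hrw
    exact hrw
  have hcT : ∀ q ∈ T, c q = 0 := by
    intro q hq
    have : c ((eT.symm (eT ⟨q, hq⟩)) : Fin r) = 0 := congrFun hd0 (eT ⟨q, hq⟩)
    rwa [Equiv.symm_apply_apply] at this
  apply hc
  funext q
  show c q = 0
  by_cases hq : (σ q).isRight
  · exact hcT q (by rw [hT]; simp [hq])
  · obtain ⟨j, hj⟩ := Sum.isLeft_iff.1 (Sum.not_isRight.1 hq)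
    have hrw := hrow j
    have : ∑ q', G j (σ q') * c q' = G j (σ q) * c q := by
      refine Fintype.sum_eq_single q fun q' hq' => ?_
      by_cases hq'r : (σ q').isRight
      · rw [hcT q' (by rw [hT]; simp [hq'r]), mul_zero]
      · obtain ⟨j', hj'⟩ := Sum.isLeft_iff.1 (Sum.not_isRight.1 hq'r)
        have : j ≠ j' := by
          intro hjj
          exact hq' (hσ (by rw [hj, hj', hjj]))
        rw [hj']
        simp [hG, this]
    rw [this, hj] at hrw
    simpa [hG] using hrw

lemma gvdm {F : Type*} [Field F] (hsq : Function.Injective (fun a : F => a ^ 2))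
    {k : ℕ} (x : Fin k → F) (hx : Function.Injective x) (hx0 : ∀ p, x p ≠ 0)
    (y : Fin k → Fin 3) (hy : Function.Injective y) :
    (Matrix.of fun p q : Fin k => x p ^ (y q : ℕ)).det ≠ 0 := by
  have hk : k ≤ 3 := by
    simpa using Fintype.card_le_of_injective y hy
  have key : ∀ u v : F, u ≠ 0 → v ≠ 0 → u ≠ v → ∀ i j : ℕ, i < j → j ≤ 2 →
      u ^ i * v ^ j ≠ u ^ j * v ^ i := by
    intro u v hu hv huv i j hij hj2 h
    interval_cases j
    · omega
    · interval_cases i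
      exact huv (by simpa using h.symm)
    · interval_cases i
      · exact huv (hsq (show u ^ 2 = v ^ 2 by simpa using h.symm))
      · apply huv
        have h1 : u * (v * v) = u * (u * v) := by linear_combination h
        exact (mul_right_cancel₀ hv (mul_left_cancel₀ hu h1)).symm
  interval_cases k
  · simp [Matrix.det_isEmpty]
  · rw [Matrix.det_fin_one]
    exact pow_ne_zero _ (hx0 0)
  · rw [Matrix.det_fin_two]
    simp only [Matrix.of_apply]
    rw [sub_ne_zero]
    have hxne : x 0 ≠ x 1 := hx.ne (by decide)
    have hab : y 0 ≠ y 1 := hy.ne (by decide)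
    rcases lt_or_gt_of_ne (fun h => hab (Fin.ext h)) with hlt | hlt
    · exact key (x 0) (x 1) (hx0 0) (hx0 1) hxne _ _ hlt (by omega)
    · intro h
      exact key (x 1) (x 0) (hx0 1) (hx0 0) hxne.symm _ _ hlt
        (by omega) (by linear_combination h)
  · have hybij : Function.Bijective y :=
      (Fintype.bijective_iff_injective_and_card y).2 ⟨hy, rfl⟩
    set e := Equiv.ofBijective y hybij with he
    have : (Matrix.of fun p q : Fin 3 => x p ^ (y q : ℕ))
        = (Matrix.vandermonde x).submatrix id e := by
      ext p q; rfl
    rw [this, Matrix.det_permute', Matrix.det_vandermonde]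
    apply mul_ne_zero
    · rcases Int.units_eq_one_or (Equiv.Perm.sign e) with h | h <;> rw [h] <;> simp
    · refine Finset.prod_ne_zero_iff.2 fun i _ => Finset.prod_ne_zero_iff.2 fun j hj => ?_
      exact sub_ne_zero.2 (hx.ne (Finset.mem_Ioi.1 hj).ne')

lemma mds_comp {F : Type*} [Field F] {r u : ℕ} {n : Type*} {G : Matrix (Fin r) n F}
    (h : IsMDS G) (f : Fin u → n) (hf : Function.Injective f) :
    IsMDS (Matrix.of fun (i : Fin r) (q : Fin u) => G i (f q)) :=
  fun σ hσ => h (f ∘ σ) (hf.comp hσ)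

theorem stmt_13 {F : Type*} [Field F] [Fintype F] {Q r u : ℕ}
    (hQ : Fintype.card F = Q)
    (hr : 0 < r) (hu : 0 < u) (hru : r ≤ u) (hrQ : r ≤ Q)
    (hu2 : u ≤ Q + 2)
    (hu1 : (Odd Q ∨ (r ≠ 3 ∧ r ≠ Q - 1)) → u ≤ Q + 1) :
    ∃ G : Matrix (Fin r) (Fin u) F, IsMDS G := by
  classical
  by_cases hcase : u ≤ Q + 1
  · obtain ⟨m, rfl⟩ := Nat.exists_eq_succ_of_ne_zero hr.ne'
    have hemb : Nonempty (Fin u ↪ Option F) := by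
      rw [Function.Embedding.nonempty_iff_card_le]
      simpa [hQ] using hcase
    obtain ⟨f⟩ := hemb
    exact ⟨_, mds_comp (extRS_mds (F := F) m) f f.injective⟩
  · have h1 := mt hu1 hcase
    push_neg at h1
    obtain ⟨ho, h2⟩ := h1
    have hEv : Even Q := Nat.not_odd_iff_even.1 ho
    have hr3 : r = 3 ∨ r = Q - 1 := by
      rcases eq_or_ne r 3 with h | h
      · exact Or.inl h
      · exact Or.inr (h2 h)
    have hu' : u = Q + 2 := le_antisymm hu2 (by omega)
    -- characteristic 2
    obtain ⟨p, hp⟩ := CharP.exists F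
    haveI := hp
    obtain ⟨n, hpp, hcard⟩ := FiniteField.card F p
    have hp2 : p = 2 := by
      have hdvd : 2 ∣ p ^ (n : ℕ) := by
        rw [← hcard, hQ]
        exact hEv.two_dvd
      exact ((Nat.prime_dvd_prime_iff_eq Nat.prime_two hpp).1
        (Nat.Prime.dvd_of_dvd_pow Nat.prime_two hdvd)).symm
    subst hp2
    have h2F : (2 : F) = 0 := by exact_mod_cast CharP.cast_eq_zero F 2
    have hsq : Function.Injective (fun a : F => a ^ 2) := by
      intro a b hab
      have h0 : (a - b) ^ 2 = 0 := by
        linear_combination hab + (b ^ 2 - a * b) * h2F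
      have := pow_eq_zero_iff (n := 2) (by norm_num) |>.1 h0
      exact sub_eq_zero.1 this
    rcases hr3 with h3 | hq1
    · -- r = 3
      subst h3
      have hB : ∀ (k : ℕ) (s : Fin k → Fin 3) (t : Fin k → Fˣ), Function.Injective s →
          Function.Injective t →
          (Matrix.of fun p q : Fin k =>
            (Matrix.of fun (i : Fin 3) (a : Fˣ) => (a : F) ^ (i : ℕ)) (s p) (t q)).det ≠ 0 := by
        intro k s t hs ht
        have heq : (Matrix.of fun p q : Fin k =>
            (Matrix.of fun (i : Fin 3) (a : Fˣ) => (a : F) ^ (i : ℕ)) (s p) (t q))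
            = (Matrix.of fun p q : Fin k => ((t p : F)) ^ ((s q) : ℕ))ᵀ := by
          ext p q; rfl
        rw [heq, Matrix.det_transpose]
        exact gvdm hsq _ (Units.val_injective.comp ht) (fun p => Units.ne_zero _) s hs
      have hmds := std_mds (Matrix.of fun (i : Fin 3) (a : Fˣ) => (a : F) ^ (i : ℕ)) hB
      have hemb : Nonempty (Fin u ↪ (Fin 3 ⊕ Fˣ)) := by
        rw [Function.Embedding.nonempty_iff_card_le]
        have : Fintype.card Fˣ = Q - 1 := by rw [Fintype.card_units, hQ]
        simp only [Fintype.card_fin, Fintype.card_sum, this]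
        omega
      obtain ⟨f⟩ := hemb
      exact ⟨_, mds_comp hmds f f.injective⟩
    · -- r = Q - 1
      have hembe : Nonempty (Fin r ↪ Fˣ) := by
        rw [Function.Embedding.nonempty_iff_card_le]
        rw [Fintype.card_units, hQ, Fintype.card_fin, hq1]
      obtain ⟨e⟩ := hembe
      have hB : ∀ (k : ℕ) (s : Fin k → Fin r) (t : Fin k → Fin 3), Function.Injective s →
          Function.Injective t →
          (Matrix.of fun p q : Fin k =>
            (Matrix.of fun (i : Fin r) (j : Fin 3) => ((e i : F)) ^ (j : ℕ)) (s p) (t q)).det ≠ 0 := by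
        intro k s t hs ht
        exact gvdm hsq (fun p => (e (s p) : F))
          (Units.val_injective.comp (e.injective.comp hs)) (fun p => Units.ne_zero _) t ht
      have hmds := std_mds (Matrix.of fun (i : Fin r) (j : Fin 3) => ((e i : F)) ^ (j : ℕ)) hB
      have hemb : Nonempty (Fin u ↪ (Fin r ⊕ Fin 3)) := by
        rw [Function.Embedding.nonempty_iff_card_le]
        simp only [Fintype.card_fin, Fintype.card_sum]
        omega
      obtain ⟨f⟩ := hemb
      exact ⟨_, mds_comp hmds f f.injective⟩
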